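/- Let F be a field and θ : Fˣ → F a function with θ(1) = 0. Let n ≥ 1, 1 ≤ k ≤ n, a₁, …, aₙ, z₁, z₂, ħ ∈ Fˣ, and assume θ((z₁/z₂)·ħ^{k−2}) ≠ 0. Define S'_k(t) := (∏_{i=1}^{k−1} θ((aᵢ/t)·ħ²)) · θ((t/a_k)·(z₁/z₂)·ħ^{k−3}) / θ((z₁/z₂)·ħ^{k−2}) · (∏_{i=k+1}^{n} θ((t/aᵢ)·ħ⁻¹)) for t ∈ Fˣ. Then: (1) S'_k(a_l·ħ) = 0 for every l with k < l ≤ n; and (2) S'_k(a_k·ħ) = (∏_{i=1}^{k−1} θ((aᵢ/a_k)·ħ)) · (∏_{i=k+1}^{n} θ(a_k/aᵢ)); in particular the diagonal restriction S'_k(a_k·ħ) coincides with the diagonal restriction S_k(a_k·ħ⁻¹) of the separated presentation, where S_k(t) := (∏_{i=1}^{k−1} θ(aᵢ/t)) · θ((t/a_k)·(z₁/z₂)·ħ^{k−1}) / θ((z₁/z₂)·ħ^{k−2}) · (∏_{i=k+1}^{n} θ((t/aᵢ)·ħ)). -/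
import Mathlib


/-- The explicit formula for the elliptic stable envelope `Stab_C(f_k)` of
`T*P^{n-1}` in its separated bow-variety presentation (standard chamber). -/
def Ssep {F : Type*} [Field F] (θ : Fˣ → F) (n k : ℕ) (a : ℕ → Fˣ) (z₁ z₂ hbar t : Fˣ) : F :=
  (∏ i ∈ Finset.Ico 1 k, θ (a i / t)) *
    θ (t / a k * (z₁ / z₂) * hbar ^ ((k : ℤ) - 1)) / θ (z₁ / z₂ * hbar ^ ((k : ℤ) - 2)) *
    ∏ i ∈ Finset.Ioc k n, θ (t / a i * hbar)

/-- The explicit formula for the elliptic stable envelope `Stab_C(f'_k)` of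
`T*P^{n-1}` in its co-separated bow-variety presentation (standard chamber). -/
def Scosep {F : Type*} [Field F] (θ : Fˣ → F) (n k : ℕ) (a : ℕ → Fˣ) (z₁ z₂ hbar t : Fˣ) : F :=
  (∏ i ∈ Finset.Ico 1 k, θ (a i / t * hbar ^ 2)) *
    θ (t / a k * (z₁ / z₂) * hbar ^ ((k : ℤ) - 3)) / θ (z₁ / z₂ * hbar ^ ((k : ℤ) - 2)) *
    ∏ i ∈ Finset.Ioc k n, θ (t / a i * hbar⁻¹)

/-- Triangularity and diagonal restriction of the stable envelope formulas for
`T*P^{n-1}` (co-separated presentation): restriction to `f'_l` is `t ↦ a_l·hbar`; the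
diagonal restriction agrees with that of the separated presentation. -/
theorem stmt14 {F : Type*} [Field F] (θ : Fˣ → F) (hθ : θ 1 = 0)
    (n k : ℕ) (hn : 1 ≤ n) (hk1 : 1 ≤ k) (hkn : k ≤ n)
    (a : ℕ → Fˣ) (z₁ z₂ hbar : Fˣ)
    (hden : θ (z₁ / z₂ * hbar ^ ((k : ℤ) - 2)) ≠ 0) :
    (∀ l, k < l → l ≤ n → Scosep θ n k a z₁ z₂ hbar (a l * hbar) = 0)
    ∧ Scosep θ n k a z₁ z₂ hbar (a k * hbar)
        = (∏ i ∈ Finset.Ico 1 k, θ (a i / a k * hbar)) * ∏ i ∈ Finset.Ioc k n, θ (a k / a i)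
    ∧ Scosep θ n k a z₁ z₂ hbar (a k * hbar) = Ssep θ n k a z₁ z₂ hbar (a k * hbar⁻¹) := by
  have key : Scosep θ n k a z₁ z₂ hbar (a k * hbar)
      = (∏ i ∈ Finset.Ico 1 k, θ (a i / a k * hbar)) * ∏ i ∈ Finset.Ioc k n, θ (a k / a i) := by
    unfold Scosep
    have e1 : ∀ i, a i / (a k * hbar) * hbar ^ 2 = a i / a k * hbar := by
      intro i; simp [div_eq_mul_inv, mul_comm, mul_left_comm, mul_assoc, sq] <;> rw [mul_left_comm hbar, mul_inv_cancel_left]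
    have e2 : a k * hbar / a k * (z₁ / z₂) * hbar ^ ((k : ℤ) - 3)
        = z₁ / z₂ * hbar ^ ((k : ℤ) - 2) := by
      rw [show (k:ℤ) - 2 = ((k:ℤ) - 3) + 1 by ring, zpow_add_one]; simp [div_eq_mul_inv, mul_comm, mul_left_comm, mul_assoc, sq] <;> rw [mul_left_comm hbar, mul_inv_cancel_left]
    have e3 : ∀ i, a k * hbar / a i * hbar⁻¹ = a k / a i := by
      intro i; simp [div_eq_mul_inv, mul_comm, mul_left_comm, mul_assoc, sq] <;> rw [mul_left_comm hbar, mul_inv_cancel_left]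
    simp only [e1, e2, e3]
    rw [mul_div_assoc, div_self hden, mul_one]
  refine ⟨?_, key, ?_⟩
  · intro l hkl hln
    unfold Scosep
    have : (∏ i ∈ Finset.Ioc k n, θ (a l * hbar / a i * hbar⁻¹)) = 0 := by
      refine Finset.prod_eq_zero (Finset.mem_Ioc.mpr ⟨hkl, hln⟩) ?_
      have : a l * hbar / a l * hbar⁻¹ = 1 := by simp [div_eq_mul_inv, mul_comm, mul_left_comm, mul_assoc, sq] <;> rw [mul_left_comm hbar, mul_inv_cancel_left]
      rw [this, hθ]
    rw [this, mul_zero]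
  · rw [key]
    unfold Ssep
    have e1 : ∀ i, a i / (a k * hbar⁻¹) = a i / a k * hbar := by
      intro i; simp [div_eq_mul_inv, mul_comm, mul_left_comm, mul_assoc, sq] <;> rw [mul_left_comm hbar, mul_inv_cancel_left]
    have e2 : a k * hbar⁻¹ / a k * (z₁ / z₂) * hbar ^ ((k : ℤ) - 1)
        = z₁ / z₂ * hbar ^ ((k : ℤ) - 2) := by
      rw [show (k:ℤ) - 1 = ((k:ℤ) - 2) + 1 by ring, zpow_add_one]; simp [div_eq_mul_inv, mul_comm, mul_left_comm, mul_assoc, sq] <;> rw [mul_left_comm hbar, mul_inv_cancel_left]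
    have e3 : ∀ i, a k * hbar⁻¹ / a i * hbar = a k / a i := by
      intro i; simp [div_eq_mul_inv, mul_comm, mul_left_comm, mul_assoc, sq] <;> rw [mul_left_comm hbar, mul_inv_cancel_left]
    simp only [e1, e2, e3]
    rw [mul_div_assoc, div_self hden, mul_one]
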